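/- Let π_U and π be policies in a finite discounted MDP, ε = max_{s,a} |Q^π(s,a) − V^π(s)|, and D_KL^max(π_U, π) = max_s D_KL(π_U(·|s) ‖ π(·|s)). Then J(π) ≥ J(π_U) − (2ε/(1−γ)) · √(D_KL^max(π_U, π)). -/

import Mathlib

private lemma aux_logA {x : ℝ} (hx : 0 < x) (hx1 : x ≤ 1) :
    (x - 1)^2 / 2 ≤ x * Real.log x - x + 1 := by
  set u : ℝ → ℝ := fun y => y * Real.log y - y + 1 - (y-1)^2/2 with hu
  have hd : ∀ y : ℝ, 0 < y → HasDerivAt u (Real.log y - y + 1) y := by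
    intro y hy
    have h1 := Real.hasDerivAt_mul_log (ne_of_gt hy)
    have h2 := (((h1.sub (hasDerivAt_id' y)).add_const 1).sub
        ((((hasDerivAt_id' y).sub_const 1).pow 2).div_const 2))
    exact h2.congr_deriv (by push_cast; ring)
  have hmono : AntitoneOn u (Set.Ioc (0:ℝ) 1) := by
    apply antitoneOn_of_deriv_nonpos (convex_Ioc 0 1)
    · exact fun y hy => (hd y hy.1).continuousAt.continuousWithinAt
    · rw [interior_Ioc]
      exact fun y hy => (hd y hy.1).differentiableAt.differentiableWithinAt
    · rw [interior_Ioc]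
      intro y hy
      rw [(hd y hy.1).deriv]
      have := Real.log_le_sub_one_of_pos hy.1
      linarith
  have h01 : (1:ℝ) ∈ Set.Ioc (0:ℝ) 1 := by constructor <;> norm_num
  have := hmono ⟨hx, hx1⟩ h01 hx1
  have hu1 : u 1 = 0 := by simp [hu]
  rw [hu1] at this
  simp only [hu] at this
  linarith

private lemma aux_logA' {y : ℝ} (hy : 0 < y) (hy1 : y ≤ 1) :
    (1 - y)^2 / 2 ≤ -Real.log y + y - 1 := by
  set w : ℝ → ℝ := fun y => -Real.log y + y - 1 - (1-y)^2/2 with hw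
  have hd : ∀ y : ℝ, 0 < y → HasDerivAt w (-y⁻¹ + 1 + (1 - y)) y := by
    intro y hy
    have h1 := (Real.hasDerivAt_log (ne_of_gt hy)).neg
    have h2 := ((h1.add (hasDerivAt_id' y)).sub_const 1).sub
        ((((hasDerivAt_const y 1).sub (hasDerivAt_id' y)).pow 2).div_const 2)
    exact h2.congr_deriv (by simp only [Pi.sub_apply]; push_cast; ring)
  have hmono : AntitoneOn w (Set.Ioc (0:ℝ) 1) := by
    apply antitoneOn_of_deriv_nonpos (convex_Ioc 0 1)
    · exact fun y hy => (hd y hy.1).continuousAt.continuousWithinAt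
    · rw [interior_Ioc]
      exact fun y hy => (hd y hy.1).differentiableAt.differentiableWithinAt
    · rw [interior_Ioc]
      intro y hy
      rw [(hd y hy.1).deriv]
      have h2 : 2 - y ≤ 1 / y := by
        rw [le_div_iff₀ hy.1]; nlinarith [sq_nonneg (y-1)]
      rw [one_div] at h2
      linarith
  have h01 : (1:ℝ) ∈ Set.Ioc (0:ℝ) 1 := by constructor <;> norm_num
  have := hmono ⟨hy, hy1⟩ h01 hy1
  have hw1 : w 1 = 0 := by simp [hw]
  rw [hw1] at this
  simp only [hw] at this
  linarith

private lemma aux_logB {x : ℝ} (hx1 : 1 ≤ x) :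
    (x - 1)^2 / (2 * x) ≤ x * Real.log x - x + 1 := by
  have hx0 : (0:ℝ) < x := lt_of_lt_of_le one_pos hx1
  have hy0 : 0 < x⁻¹ := inv_pos.mpr hx0
  have hy1 : x⁻¹ ≤ 1 := inv_le_one_of_one_le₀ hx1
  have h := aux_logA' hy0 hy1
  rw [Real.log_inv] at h
  have h2 := mul_le_mul_of_nonneg_left h hx0.le
  have hxi : x * x⁻¹ = 1 := mul_inv_cancel₀ (ne_of_gt hx0)
  have e1 : x * ((1 - x⁻¹)^2 / 2) = (x - 1)^2 / (2 * x) := by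
    field_simp
  have e2 : x * (- -Real.log x + x⁻¹ - 1) = x * Real.log x + 1 - x := by
    rw [neg_neg, mul_sub, mul_add, hxi]; ring
  rw [e1, e2] at h2
  linarith

private lemma aux_pointwise {p q : ℝ} (hp : 0 ≤ p) (hq : 0 ≤ q) (hsupp : 0 < p → 0 < q) :
    (p - q)^2 / (2 * max p q) ≤ p * Real.log (p / q) - p + q := by
  rcases eq_or_lt_of_le hp with h0 | hp'
  · -- p = 0
    rw [← h0]
    rcases eq_or_lt_of_le hq with hq0 | hq'
    · rw [← hq0]; norm_num
    · rw [max_eq_right hq]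
      have : (0 - q)^2 / (2 * q) = q / 2 := by
        field_simp; ring
      rw [this]
      simp only [zero_mul, zero_sub, zero_add, neg_zero]
      linarith
  · have hq' := hsupp hp'
    set x := p / q with hx
    have hx0 : 0 < x := div_pos hp' hq'
    have hpx : p = q * x := by rw [hx]; field_simp
    have key : (x - 1)^2 / (2 * max x 1) ≤ x * Real.log x - x + 1 := by
      rcases le_total x 1 with h | h
      · rw [max_eq_right h, mul_one]; exact aux_logA hx0 h
      · rw [max_eq_left h]; exact aux_logB h
    have hm : 0 < max x 1 := lt_of_lt_of_le one_pos (le_max_right _ _)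
    have hmax : max p q = q * max x 1 := by
      rw [hpx, mul_max_of_nonneg _ _ hq'.le, mul_one]
    have e1 : (p - q)^2 / (2 * max p q) = q * ((x - 1)^2 / (2 * max x 1)) := by
      rw [hmax, hpx]
      field_simp [hq'.ne', hm.ne']
    have e2 : p * Real.log (p / q) - p + q = q * (x * Real.log x - x + 1) := by
      rw [← hx, hpx]; ring
    rw [e1, e2]
    exact mul_le_mul_of_nonneg_left key hq'.le

private lemma aux_pinsker {A : Type} [Fintype A] (p q : A → ℝ)
    (hp0 : ∀ a, 0 ≤ p a) (hp1 : ∑ a, p a = 1)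
    (hq0 : ∀ a, 0 ≤ q a) (hq1 : ∑ a, q a = 1)
    (hsupp : ∀ a, 0 < p a → 0 < q a) :
    ∑ a, |p a - q a| ≤ 2 * Real.sqrt (∑ a, p a * Real.log (p a / q a)) := by
  set KL := ∑ a, p a * Real.log (p a / q a) with hKLdef
  set f : A → ℝ := fun a => |p a - q a| / Real.sqrt (2 * max (p a) (q a)) with hf
  set g : A → ℝ := fun a => Real.sqrt (2 * max (p a) (q a)) with hg
  have hmax0 : ∀ a, 0 ≤ max (p a) (q a) := fun a => le_trans (hp0 a) (le_max_left _ _)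
  have hfg : ∀ a, f a * g a = |p a - q a| := by
    intro a
    rcases eq_or_lt_of_le (hmax0 a) with h | h
    · have hp' : p a = 0 := le_antisymm (h ▸ le_max_left _ _) (hp0 a)
      have hq' : q a = 0 := le_antisymm (h ▸ le_max_right _ _) (hq0 a)
      simp [hf, hg, hp', hq']
    · have hs : Real.sqrt (2 * max (p a) (q a)) ≠ 0 :=
        ne_of_gt (Real.sqrt_pos.mpr (by linarith))
      simp only [hf, hg]
      field_simp
  have hf2 : ∀ a, f a ^ 2 ≤ p a * Real.log (p a / q a) - p a + q a := by
    intro a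
    have hpt := aux_pointwise (hp0 a) (hq0 a) (hsupp a)
    have he : f a ^ 2 = (p a - q a)^2 / (2 * max (p a) (q a)) := by
      simp only [hf]
      rw [div_pow, Real.sq_sqrt (by have := hmax0 a; linarith), sq_abs]
    rw [he]; exact hpt
  have hsumf2 : ∑ a, f a ^ 2 ≤ KL := by
    calc ∑ a, f a ^ 2 ≤ ∑ a, (p a * Real.log (p a / q a) - p a + q a) :=
          Finset.sum_le_sum fun a _ => hf2 a
      _ = KL := by
          rw [Finset.sum_add_distrib, Finset.sum_sub_distrib, hp1, hq1]
          ring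
  have hsumg2 : ∑ a, g a ^ 2 ≤ 4 := by
    have he : ∀ a, g a ^ 2 = 2 * max (p a) (q a) := fun a => Real.sq_sqrt (by have := hmax0 a; linarith)
    calc ∑ a, g a ^ 2 = ∑ a, 2 * max (p a) (q a) := Finset.sum_congr rfl fun a _ => he a
      _ ≤ ∑ a, 2 * (p a + q a) := Finset.sum_le_sum fun a _ => by
          have h1 := hp0 a; have h2 := hq0 a
          have : max (p a) (q a) ≤ p a + q a :=
            max_le (le_add_of_nonneg_right h2) (le_add_of_nonneg_left h1)
          linarith
      _ = 4 := by
          rw [← Finset.mul_sum, Finset.sum_add_distrib, hp1, hq1]; norm_num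
  have hKL0 : 0 ≤ KL := le_trans (Finset.sum_nonneg fun a _ => sq_nonneg _) hsumf2
  have hcs := Finset.sum_mul_sq_le_sq_mul_sq Finset.univ f g
  have h1 : (∑ a, |p a - q a|)^2 ≤ 4 * KL := by
    rw [show (∑ a, |p a - q a|) = ∑ a, f a * g a from
      Finset.sum_congr rfl fun a _ => (hfg a).symm]
    calc (∑ a, f a * g a)^2 ≤ (∑ a, f a ^ 2) * (∑ a, g a ^ 2) := hcs
      _ ≤ KL * 4 := mul_le_mul hsumf2 hsumg2
          (Finset.sum_nonneg fun a _ => sq_nonneg _) hKL0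
      _ = 4 * KL := mul_comm _ _
  have habs : 0 ≤ ∑ a, |p a - q a| := Finset.sum_nonneg fun a _ => abs_nonneg _
  have h2 : ∑ a, |p a - q a| ≤ Real.sqrt (4 * KL) := by
    rw [← Real.sqrt_sq habs]
    exact Real.sqrt_le_sqrt h1
  calc ∑ a, |p a - q a| ≤ Real.sqrt (4 * KL) := h2
    _ = 2 * Real.sqrt KL := by
        rw [Real.sqrt_mul (by norm_num), show Real.sqrt 4 = 2 by
          rw [show (4:ℝ) = 2^2 by norm_num, Real.sqrt_sq (by norm_num)]]
theorem performance_lower_bound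
    {S A : Type} [Fintype S] [Fintype A] [Nonempty S] [Nonempty A]
    (T : S → A → S → ℝ) (r : S → A → ℝ) (ρ : S → ℝ) (γ : ℝ)
    (hγ0 : 0 < γ) (hγ1 : γ < 1)
    (hT0 : ∀ s a s', 0 ≤ T s a s') (hT1 : ∀ s a, ∑ s', T s a s' = 1)
    (hρ0 : ∀ s, 0 ≤ ρ s) (hρ1 : ∑ s, ρ s = 1)
    (πU π : S → A → ℝ)
    (hπU0 : ∀ s a, 0 ≤ πU s a) (hπU1 : ∀ s, ∑ a, πU s a = 1)
    (hπ0 : ∀ s a, 0 ≤ π s a) (hπ1 : ∀ s, ∑ a, π s a = 1)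
    (hsupp : ∀ s a, 0 < πU s a → 0 < π s a)
    (VU V : S → ℝ)
    (hVU : ∀ s, VU s = ∑ a, πU s a * (r s a + γ * ∑ s', T s a s' * VU s'))
    (hV : ∀ s, V s = ∑ a, π s a * (r s a + γ * ∑ s', T s a s' * V s'))
    (Q : S → A → ℝ)
    (hQ : ∀ s a, Q s a = r s a + γ * ∑ s', T s a s' * V s')
    (ε DKLmax : ℝ)
    (hε : ε = (Finset.univ : Finset (S × A)).sup' Finset.univ_nonempty
        (fun p => |Q p.1 p.2 - V p.1|))
    (hDKL : DKLmax = (Finset.univ : Finset S).sup' Finset.univ_nonempty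
        (fun s => ∑ a, πU s a * Real.log (πU s a / π s a))) :
    (∑ s, ρ s * VU s) - (2 * ε / (1 - γ)) * Real.sqrt DKLmax ≤ ∑ s, ρ s * V s := by
  set Δ : S → ℝ := fun s => VU s - V s with hΔ
  have hQV : ∀ s, V s = ∑ a, π s a * Q s a := by
    intro s
    rw [hV s]
    exact Finset.sum_congr rfl fun a _ => by rw [hQ s a]
  have hBell : ∀ s, Δ s = (∑ a, (πU s a - π s a) * (Q s a - V s))
      + γ * ∑ a, πU s a * ∑ s', T s a s' * Δ s' := by
    intro s
    have h1 : VU s = (∑ a, πU s a * Q s a)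
        + γ * ∑ a, πU s a * ∑ s', T s a s' * Δ s' := by
      rw [hVU s, Finset.mul_sum, ← Finset.sum_add_distrib]
      refine Finset.sum_congr rfl fun a _ => ?_
      have hsplit : (∑ s', T s a s' * VU s')
          = (∑ s', T s a s' * V s') + ∑ s', T s a s' * Δ s' := by
        rw [← Finset.sum_add_distrib]
        refine Finset.sum_congr rfl fun s' _ => ?_
        simp only [hΔ]; ring
      rw [hsplit, hQ s a]; ring
    have h2 : (∑ a, (πU s a - π s a) * (Q s a - V s))
        = (∑ a, πU s a * Q s a) - V s := by
      calc (∑ a, (πU s a - π s a) * (Q s a - V s))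
          = (∑ a, πU s a * Q s a) - (∑ a, π s a * Q s a)
            - (∑ a, πU s a) * V s + (∑ a, π s a) * V s := by
            rw [Finset.sum_mul, Finset.sum_mul, ← Finset.sum_sub_distrib,
              ← Finset.sum_sub_distrib, ← Finset.sum_add_distrib]
            exact Finset.sum_congr rfl fun a _ => by ring
        _ = (∑ a, πU s a * Q s a) - V s := by
            rw [hπU1 s, hπ1 s, ← hQV s]; ring
    simp only [hΔ]
    rw [h2]
    have := hQV s
    linarith [h1]
  have hε0 : 0 ≤ ε := by
    have h := Finset.le_sup' (fun p : S × A => |Q p.1 p.2 - V p.1|)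
      (Finset.mem_univ (Classical.arbitrary (S × A)))
    rw [hε]
    exact le_trans (abs_nonneg _) h
  have hQVε : ∀ s a, |Q s a - V s| ≤ ε := by
    intro s a
    rw [hε]
    exact Finset.le_sup' (fun p : S × A => |Q p.1 p.2 - V p.1|) (Finset.mem_univ (s, a))
  have hKLle : ∀ s, (∑ a, πU s a * Real.log (πU s a / π s a)) ≤ DKLmax := fun s => by
    rw [hDKL]
    exact Finset.le_sup' (fun s => ∑ a, πU s a * Real.log (πU s a / π s a))
      (Finset.mem_univ s)
  have hadv : ∀ s, |∑ a, (πU s a - π s a) * (Q s a - V s)|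
      ≤ 2 * ε * Real.sqrt DKLmax := by
    intro s
    have h2 := aux_pinsker (πU s) (π s) (hπU0 s) (hπU1 s) (hπ0 s) (hπ1 s) (hsupp s)
    have h3 : Real.sqrt (∑ a, πU s a * Real.log (πU s a / π s a))
        ≤ Real.sqrt DKLmax := Real.sqrt_le_sqrt (hKLle s)
    calc |∑ a, (πU s a - π s a) * (Q s a - V s)|
        ≤ ∑ a, |(πU s a - π s a) * (Q s a - V s)| := Finset.abs_sum_le_sum_abs _ _
      _ ≤ ∑ a, |πU s a - π s a| * ε := Finset.sum_le_sum fun a _ => by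
          rw [abs_mul]
          exact mul_le_mul_of_nonneg_left (hQVε s a) (abs_nonneg _)
      _ = (∑ a, |πU s a - π s a|) * ε := (Finset.sum_mul _ _ _).symm
      _ ≤ (2 * Real.sqrt (∑ a, πU s a * Real.log (πU s a / π s a))) * ε :=
          mul_le_mul_of_nonneg_right h2 hε0
      _ ≤ 2 * ε * Real.sqrt DKLmax := by
          have h4 := Real.sqrt_nonneg (∑ a, πU s a * Real.log (πU s a / π s a))
          nlinarith [h3, h4, hε0]
  have hne : (Finset.univ : Finset S).Nonempty := Finset.univ_nonempty
  set M := Finset.univ.sup' hne (fun s => |Δ s|) with hM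
  have hMle : ∀ s, |Δ s| ≤ M := by
    intro s; rw [hM]; exact Finset.le_sup' (fun s => |Δ s|) (Finset.mem_univ s)
  obtain ⟨s₀, _, hs₀⟩ := Finset.exists_mem_eq_sup' hne (fun s => |Δ s|)
  have hM0 : 0 ≤ M := le_trans (abs_nonneg _) (hMle (Classical.arbitrary S))
  have hinner : ∀ s, |∑ a, πU s a * ∑ s', T s a s' * Δ s'| ≤ M := by
    intro s
    calc |∑ a, πU s a * ∑ s', T s a s' * Δ s'|
        ≤ ∑ a, |πU s a * ∑ s', T s a s' * Δ s'| := Finset.abs_sum_le_sum_abs _ _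
      _ ≤ ∑ a, πU s a * M := Finset.sum_le_sum fun a _ => by
          rw [abs_mul, abs_of_nonneg (hπU0 s a)]
          apply mul_le_mul_of_nonneg_left _ (hπU0 s a)
          calc |∑ s', T s a s' * Δ s'|
              ≤ ∑ s', |T s a s' * Δ s'| := Finset.abs_sum_le_sum_abs _ _
            _ ≤ ∑ s', T s a s' * M := Finset.sum_le_sum fun s' _ => by
                rw [abs_mul, abs_of_nonneg (hT0 s a s')]
                exact mul_le_mul_of_nonneg_left (hMle s') (hT0 s a s')
            _ = M := by rw [← Finset.sum_mul, hT1 s a, one_mul]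
      _ = M := by rw [← Finset.sum_mul, hπU1 s, one_mul]
  have hrec : M ≤ 2 * ε * Real.sqrt DKLmax + γ * M := by
    have hMs : M = |Δ s₀| := by rw [hM, hs₀]
    have hstep : |Δ s₀| ≤ 2 * ε * Real.sqrt DKLmax + γ * M :=
      calc |Δ s₀| = |(∑ a, (πU s₀ a - π s₀ a) * (Q s₀ a - V s₀))
          + γ * ∑ a, πU s₀ a * ∑ s', T s₀ a s' * Δ s'| := by rw [hBell s₀]
      _ ≤ |∑ a, (πU s₀ a - π s₀ a) * (Q s₀ a - V s₀)|
          + |γ * ∑ a, πU s₀ a * ∑ s', T s₀ a s' * Δ s'| := abs_add_le _ _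
      _ = |∑ a, (πU s₀ a - π s₀ a) * (Q s₀ a - V s₀)|
          + γ * |∑ a, πU s₀ a * ∑ s', T s₀ a s' * Δ s'| := by
          rw [abs_mul, abs_of_nonneg hγ0.le]
      _ ≤ 2 * ε * Real.sqrt DKLmax + γ * M :=
          add_le_add (hadv s₀) (mul_le_mul_of_nonneg_left (hinner s₀) hγ0.le)
    linarith [hstep, hMs.le, hMs.ge]
  have hMbound : M ≤ 2 * ε * Real.sqrt DKLmax / (1 - γ) := by
    rw [le_div_iff₀ (by linarith : (0:ℝ) < 1 - γ)]
    nlinarith [hrec]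
  have hfin : (∑ s, ρ s * VU s) - (∑ s, ρ s * V s)
      ≤ 2 * ε * Real.sqrt DKLmax / (1 - γ) := by
    have e : (∑ s, ρ s * VU s) - (∑ s, ρ s * V s) = ∑ s, ρ s * Δ s := by
      rw [← Finset.sum_sub_distrib]
      refine Finset.sum_congr rfl fun s _ => ?_
      simp only [hΔ]; ring
    rw [e]
    calc ∑ s, ρ s * Δ s
        ≤ ∑ s, ρ s * M := Finset.sum_le_sum fun s _ =>
          mul_le_mul_of_nonneg_left (le_trans (le_abs_self _) (hMle s)) (hρ0 s)
      _ = M := by rw [← Finset.sum_mul, hρ1, one_mul]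
      _ ≤ _ := hMbound
  have heq : (2 * ε / (1 - γ)) * Real.sqrt DKLmax
      = 2 * ε * Real.sqrt DKLmax / (1 - γ) := by ring
  linarith [hfin]
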